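/- Let β ∈ (0,1) and let q, q' be positive rationals with q > q'. If A, A' ∈ (0, 1/(1+β)) satisfy q·T₁(β,A) = T₂(β,A) and q'·T₁(β,A') = T₂(β,A'), then A < A'. (That is, the function q ↦ Â₁(β,q) defined implicitly by q·T₁(β,Â₁) = T₂(β,Â₁) is strictly decreasing on the positive rationals.) -/

import Mathlib

open Real Filter Topology

/-- The complete elliptic integral of the first kind,
`K(κ) = ∫₀¹ dv / √((1 - v²)(1 - κ² v²))`. -/
noncomputable def K (κ : ℝ) : ℝ :=
  ∫ v in (0:ℝ)..1, 1 / Real.sqrt ((1 - v ^ 2) * (1 - κ ^ 2 * v ^ 2))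

/-- The modulus `κ₁(β, A₁)`, defined by
`κ₁² = (A₁(1-β) + √(1-4βA₁²)) / (2√(1-4βA₁²))`. -/
noncomputable def κ₁ (β A₁ : ℝ) : ℝ :=
  Real.sqrt ((A₁ * (1 - β) + Real.sqrt (1 - 4 * β * A₁ ^ 2)) /
    (2 * Real.sqrt (1 - 4 * β * A₁ ^ 2)))

/-- The modulus `κ₂(β)`, defined by `κ₂² = β/(1+β)`. -/
noncomputable def κ₂ (β : ℝ) : ℝ := Real.sqrt (β / (1 + β))

/-- The period `T₁(β,A₁) = 2√(2/a) (1-4βA₁²)^{-1/4} K(κ₁(β,A₁))` of the ξ-motion. -/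
noncomputable def T₁ (a β A₁ : ℝ) : ℝ :=
  2 * Real.sqrt (2 / a) / (1 - 4 * β * A₁ ^ 2) ^ ((1:ℝ)/4) * K (κ₁ β A₁)

/-- The period `T₂(β,A₁) = 2/√(a A₁ (1+β)) · K(κ₂(β))` of the φ-motion. -/
noncomputable def T₂ (a β A₁ : ℝ) : ℝ :=
  2 / Real.sqrt (a * A₁ * (1 + β)) * K (κ₂ β)

/- ### Auxiliary lemmas about `K` -/

lemma K_integrand_integrable {κ : ℝ} (hκ : κ ^ 2 < 1) :
    IntervalIntegrable (fun v : ℝ => 1 / Real.sqrt ((1 - v ^ 2) * (1 - κ ^ 2 * v ^ 2)))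
      MeasureTheory.volume 0 1 := by
  have hk2 : 0 < 1 - κ ^ 2 := by linarith
  have h1 : IntervalIntegrable (fun x : ℝ => x ^ (-(1/2) : ℝ)) MeasureTheory.volume 0 1 :=
    intervalIntegral.intervalIntegrable_rpow' (by norm_num)
  have h2 : IntervalIntegrable (fun x : ℝ => (1 - x) ^ (-(1/2) : ℝ))
      MeasureTheory.volume 0 1 := by
    simpa using (h1.comp_sub_left 1).symm
  have hb : IntervalIntegrable
      (fun x : ℝ => (Real.sqrt (1 - κ ^ 2))⁻¹ * (1 - x) ^ (-(1/2) : ℝ))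
      MeasureTheory.volume 0 1 := h2.const_mul _
  apply hb.mono_fun
  · apply Measurable.aestronglyMeasurable
    fun_prop
  · rw [Filter.EventuallyLE, MeasureTheory.ae_restrict_iff' measurableSet_uIoc]
    filter_upwards with x hx
    rw [Set.uIoc_of_le (by norm_num : (0:ℝ) ≤ 1)] at hx
    obtain ⟨hx0, hx1⟩ := hx
    have hx1' : 0 ≤ 1 - x := by linarith
    have hnn : (0:ℝ) ≤ 1 / Real.sqrt ((1 - x ^ 2) * (1 - κ ^ 2 * x ^ 2)) := by positivity
    have hnn2 : (0:ℝ) ≤ (Real.sqrt (1 - κ ^ 2))⁻¹ * (1 - x) ^ (-(1/2) : ℝ) := by positivity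
    rw [Real.norm_eq_abs, Real.norm_eq_abs, abs_of_nonneg hnn, abs_of_nonneg hnn2]
    have hrw : (1 - x) ^ (-(1/2) : ℝ) = (Real.sqrt (1 - x))⁻¹ := by
      rw [Real.rpow_neg hx1', Real.sqrt_eq_rpow]
    rw [hrw, ← mul_inv, ← Real.sqrt_mul hk2.le]
    rcases eq_or_lt_of_le hx1 with h | h
    · subst h
      norm_num
    · have hY : 0 < (1 - κ ^ 2) * (1 - x) := mul_pos hk2 (by linarith)
      have hx2 : x ^ 2 ≤ x := by nlinarith [mul_nonneg hx0.le (sub_nonneg.2 h.le)]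
      have hx2' : (0:ℝ) ≤ 1 - x ^ 2 := by nlinarith
      have f1 : 1 - x ≤ 1 - x ^ 2 := by linarith
      have f2 : 1 - κ ^ 2 ≤ 1 - κ ^ 2 * x ^ 2 := by
        nlinarith [mul_nonneg (sq_nonneg κ) hx2']
      have hle : (1 - κ ^ 2) * (1 - x) ≤ (1 - x ^ 2) * (1 - κ ^ 2 * x ^ 2) := by
        have hm := mul_le_mul f2 f1 hx1' (by linarith : (0:ℝ) ≤ 1 - κ ^ 2 * x ^ 2)
        linarith [mul_comm (1 - κ ^ 2 * x ^ 2) (1 - x ^ 2), hm]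
      have := Real.sqrt_le_sqrt hle
      have hYpos : 0 < Real.sqrt ((1 - κ ^ 2) * (1 - x)) := Real.sqrt_pos.2 hY
      rw [one_div]
      exact inv_anti₀ hYpos this

lemma K_pos {κ : ℝ} (hκ : κ ^ 2 < 1) : 0 < K κ := by
  apply intervalIntegral.intervalIntegral_pos_of_pos_on (K_integrand_integrable hκ) _ one_pos
  intro x hx
  obtain ⟨hx0, hx1⟩ := hx
  have hx2 : x ^ 2 < 1 := by nlinarith
  have hk2 : κ ^ 2 * x ^ 2 < 1 := by nlinarith [mul_nonneg (sq_nonneg κ) (show (0:ℝ) ≤ 1 - x ^ 2 by linarith), sq_nonneg κ]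
  have h1 : 0 < (1 - x ^ 2) * (1 - κ ^ 2 * x ^ 2) :=
    mul_pos (by linarith) (by linarith)
  have h2 : 0 < Real.sqrt ((1 - x ^ 2) * (1 - κ ^ 2 * x ^ 2)) := Real.sqrt_pos.2 h1
  exact one_div_pos.2 h2

lemma K_lt_K {κ κ' : ℝ} (h1 : κ' ^ 2 < κ ^ 2) (h2 : κ ^ 2 < 1) : K κ' < K κ := by
  have h1' : κ' ^ 2 < 1 := h1.trans h2
  have hi := K_integrand_integrable h2
  have hi' := K_integrand_integrable h1'
  rw [K, K, ← sub_pos, ← intervalIntegral.integral_sub hi hi']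
  apply intervalIntegral.intervalIntegral_pos_of_pos_on (hi.sub hi') _ one_pos
  intro x hx
  obtain ⟨hx0, hx1⟩ := hx
  have hx2 : x ^ 2 < 1 := by nlinarith
  have hk2 : κ ^ 2 * x ^ 2 < 1 := by nlinarith [mul_nonneg (sq_nonneg κ) (show (0:ℝ) ≤ 1 - x ^ 2 by linarith), sq_nonneg κ]
  have hX : 0 < (1 - x ^ 2) * (1 - κ ^ 2 * x ^ 2) :=
    mul_pos (by linarith) (by linarith)
  have hlt : (1 - x ^ 2) * (1 - κ ^ 2 * x ^ 2) < (1 - x ^ 2) * (1 - κ' ^ 2 * x ^ 2) := by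
    apply mul_lt_mul_of_pos_left _ (show (0:ℝ) < 1 - x ^ 2 by linarith)
    have : κ' ^ 2 * x ^ 2 < κ ^ 2 * x ^ 2 :=
      mul_lt_mul_of_pos_right h1 (pow_pos hx0 2)
    linarith
  have hs := Real.sqrt_lt_sqrt hX.le hlt
  have h0 : 0 < Real.sqrt ((1 - x ^ 2) * (1 - κ ^ 2 * x ^ 2)) := Real.sqrt_pos.2 hX
  have := one_div_lt_one_div_of_lt h0 hs
  linarith

/- ### Auxiliary lemmas about the moduli and periods -/

section Periods

variable {a β A A' : ℝ}

lemma s_pos (hβ0 : 0 < β) (hβ1 : β < 1) (hA0 : 0 < A) (hA1 : A * (1 + β) < 1) :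
    0 < 1 - 4 * β * A ^ 2 := by
  nlinarith [sq_nonneg (1 - β), sq_nonneg A, mul_pos (show (0:ℝ) < 1 - A * (1 + β) by linarith)
    (show (0:ℝ) < 1 + A * (1 + β) by nlinarith)]

lemma kappa1_sq (hβ0 : 0 < β) (hβ1 : β < 1) (hA0 : 0 < A) (hA1 : A * (1 + β) < 1) :
    (κ₁ β A) ^ 2 = (A * (1 - β) + Real.sqrt (1 - 4 * β * A ^ 2)) /
      (2 * Real.sqrt (1 - 4 * β * A ^ 2)) := by
  have hs : 0 < Real.sqrt (1 - 4 * β * A ^ 2) := Real.sqrt_pos.2 (s_pos hβ0 hβ1 hA0 hA1)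
  apply Real.sq_sqrt
  have : 0 < A * (1 - β) := mul_pos hA0 (by linarith)
  positivity

lemma kappa1_sq_lt_one (hβ0 : 0 < β) (hβ1 : β < 1) (hA0 : 0 < A) (hA1 : A * (1 + β) < 1) :
    (κ₁ β A) ^ 2 < 1 := by
  rw [kappa1_sq hβ0 hβ1 hA0 hA1]
  have hs : 0 < Real.sqrt (1 - 4 * β * A ^ 2) := Real.sqrt_pos.2 (s_pos hβ0 hβ1 hA0 hA1)
  rw [div_lt_one (by positivity)]
  have h : A * (1 - β) < Real.sqrt (1 - 4 * β * A ^ 2) := by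
    refine (Real.lt_sqrt (by nlinarith)).2 ?_
    nlinarith [mul_pos (show (0:ℝ) < 1 - A * (1 + β) by linarith)
      (show (0:ℝ) < 1 + A * (1 + β) by nlinarith)]
  linarith

lemma kappa1_sq_mono (hβ0 : 0 < β) (hβ1 : β < 1) (hA'0 : 0 < A') (hA'A : A' < A)
    (hA1 : A * (1 + β) < 1) : (κ₁ β A') ^ 2 < (κ₁ β A) ^ 2 := by
  have hA0 : 0 < A := hA'0.trans hA'A
  have hA'1 : A' * (1 + β) < 1 := by nlinarith
  have hsq : 1 - 4 * β * A ^ 2 < 1 - 4 * β * A' ^ 2 := by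
    nlinarith [mul_pos (mul_pos (show (0:ℝ) < 4 * β by linarith) (sub_pos.2 hA'A))
      (show (0:ℝ) < A + A' by linarith)]
  have hs : 0 < Real.sqrt (1 - 4 * β * A ^ 2) := Real.sqrt_pos.2 (s_pos hβ0 hβ1 hA0 hA1)
  have hs' : 0 < Real.sqrt (1 - 4 * β * A' ^ 2) := Real.sqrt_pos.2 (s_pos hβ0 hβ1 hA'0 hA'1)
  have hss' : Real.sqrt (1 - 4 * β * A ^ 2) < Real.sqrt (1 - 4 * β * A' ^ 2) :=
    Real.sqrt_lt_sqrt (s_pos hβ0 hβ1 hA0 hA1).le hsq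
  rw [kappa1_sq hβ0 hβ1 hA0 hA1, kappa1_sq hβ0 hβ1 hA'0 hA'1]
  rw [div_lt_div_iff₀ (by positivity) (by positivity)]
  have h1 : A' * (1 - β) < A * (1 - β) := by nlinarith
  nlinarith [mul_lt_mul_of_pos_right h1 hs,
    mul_lt_mul_of_pos_left hss' (mul_pos hA0 (show (0:ℝ) < 1 - β by linarith))]

lemma T1_pos (ha : 0 < a) (hβ0 : 0 < β) (hβ1 : β < 1) (hA0 : 0 < A) (hA1 : A * (1 + β) < 1) :
    0 < T₁ a β A := by
  have hs := s_pos hβ0 hβ1 hA0 hA1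
  have hK := K_pos (kappa1_sq_lt_one hβ0 hβ1 hA0 hA1)
  have hp : 0 < (1 - 4 * β * A ^ 2) ^ ((1:ℝ)/4) := Real.rpow_pos_of_pos hs _
  have hc : 0 < 2 * Real.sqrt (2 / a) := by positivity
  exact mul_pos (div_pos hc hp) hK

lemma T1_mono (ha : 0 < a) (hβ0 : 0 < β) (hβ1 : β < 1) (hA'0 : 0 < A') (hA'A : A' < A)
    (hA1 : A * (1 + β) < 1) : T₁ a β A' < T₁ a β A := by
  have hA0 : 0 < A := hA'0.trans hA'A
  have hA'1 : A' * (1 + β) < 1 := by nlinarith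
  have hs := s_pos hβ0 hβ1 hA0 hA1
  have hs' := s_pos hβ0 hβ1 hA'0 hA'1
  have hsq : 1 - 4 * β * A ^ 2 < 1 - 4 * β * A' ^ 2 := by
    nlinarith [mul_pos (mul_pos (show (0:ℝ) < 4 * β by linarith) (sub_pos.2 hA'A))
      (show (0:ℝ) < A + A' by linarith)]
  have hp : 0 < (1 - 4 * β * A ^ 2) ^ ((1:ℝ)/4) := Real.rpow_pos_of_pos hs _
  have hp' : 0 < (1 - 4 * β * A' ^ 2) ^ ((1:ℝ)/4) := Real.rpow_pos_of_pos hs' _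
  have hplt : (1 - 4 * β * A ^ 2) ^ ((1:ℝ)/4) < (1 - 4 * β * A' ^ 2) ^ ((1:ℝ)/4) :=
    Real.rpow_lt_rpow hs.le hsq (by norm_num)
  have hc : 0 < 2 * Real.sqrt (2 / a) := by positivity
  have hK1 : (κ₁ β A) ^ 2 < 1 := kappa1_sq_lt_one hβ0 hβ1 hA0 hA1
  have hKlt : K (κ₁ β A') < K (κ₁ β A) :=
    K_lt_K (kappa1_sq_mono hβ0 hβ1 hA'0 hA'A hA1) hK1
  have hKpos : 0 < K (κ₁ β A) := K_pos hK1
  calc 2 * Real.sqrt (2 / a) / (1 - 4 * β * A' ^ 2) ^ ((1:ℝ)/4) * K (κ₁ β A')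
      < 2 * Real.sqrt (2 / a) / (1 - 4 * β * A' ^ 2) ^ ((1:ℝ)/4) * K (κ₁ β A) :=
        mul_lt_mul_of_pos_left hKlt (div_pos hc hp')
    _ < 2 * Real.sqrt (2 / a) / (1 - 4 * β * A ^ 2) ^ ((1:ℝ)/4) * K (κ₁ β A) :=
        mul_lt_mul_of_pos_right (div_lt_div_of_pos_left hc hp hplt) hKpos

lemma kappa2_sq_lt_one (hβ0 : 0 < β) : (κ₂ β) ^ 2 < 1 := by
  have h : (0:ℝ) ≤ β / (1 + β) := by positivity
  rw [κ₂, Real.sq_sqrt h, div_lt_one (by linarith)]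
  linarith

lemma T2_anti (ha : 0 < a) (hβ0 : 0 < β) (hA'0 : 0 < A') (hA'A : A' < A) :
    T₂ a β A < T₂ a β A' := by
  have hA0 : 0 < A := hA'0.trans hA'A
  have hK : 0 < K (κ₂ β) := K_pos (kappa2_sq_lt_one hβ0)
  have h1 : a * A' * (1 + β) < a * A * (1 + β) := by
    nlinarith [mul_pos (mul_pos ha (sub_pos.2 hA'A)) (show (0:ℝ) < 1 + β by linarith)]
  have hpos' : 0 < a * A' * (1 + β) := by positivity
  have hss : Real.sqrt (a * A' * (1 + β)) < Real.sqrt (a * A * (1 + β)) :=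
    Real.sqrt_lt_sqrt hpos'.le h1
  have hs' : 0 < Real.sqrt (a * A' * (1 + β)) := Real.sqrt_pos.2 hpos'
  exact mul_lt_mul_of_pos_right
    (div_lt_div_of_pos_left two_pos hs' hss) hK

end Periods

/-- The implicitly defined function `q ↦ Â₁(β,q)` is strictly decreasing:
if `q > q'` and `A, A'` solve `q T₁ = T₂`, `q' T₁ = T₂` respectively, then `A < A'`. -/
theorem A₁_strictAnti_in_q (a : ℝ) (ha : 0 < a) (β : ℝ) (hβ : β ∈ Set.Ioo (0:ℝ) 1)
    (q q' : ℚ) (hq' : 0 < q') (hqq' : q' < q)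
    (A A' : ℝ) (hA : A ∈ Set.Ioo 0 (1 / (1 + β))) (hA' : A' ∈ Set.Ioo 0 (1 / (1 + β)))
    (hsol : (q : ℝ) * T₁ a β A = T₂ a β A)
    (hsol' : (q' : ℝ) * T₁ a β A' = T₂ a β A') :
    A < A' := by
  obtain ⟨hβ0, hβ1⟩ := hβ
  obtain ⟨hA0, hA1⟩ := hA
  obtain ⟨hA'0, hA'1⟩ := hA'
  have hβp : (0:ℝ) < 1 + β := by linarith
  have hA1' : A * (1 + β) < 1 := by
    rw [lt_div_iff₀ hβp] at hA1; linarith [hA1]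
  have hA'1' : A' * (1 + β) < 1 := by
    rw [lt_div_iff₀ hβp] at hA'1; linarith [hA'1]
  by_contra h
  push_neg at h
  rcases eq_or_lt_of_le h with heq | hlt
  · -- A' = A
    have hT1pos : 0 < T₁ a β A := T1_pos ha hβ0 hβ1 hA0 hA1'
    rw [heq] at hsol'
    have : (q : ℝ) = (q' : ℝ) := by
      have := hsol.trans hsol'.symm
      exact mul_right_cancel₀ (ne_of_gt hT1pos) this
    have : q = q' := by exact_mod_cast this
    exact absurd this (ne_of_gt hqq')
  · -- A' < A
    have hT1pos : 0 < T₁ a β A := T1_pos ha hβ0 hβ1 hA0 hA1'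
    have h1 : T₁ a β A' < T₁ a β A := T1_mono ha hβ0 hβ1 hA'0 hlt hA1'
    have h2 : T₂ a β A < T₂ a β A' := T2_anti ha hβ0 hA'0 hlt
    have hq'pos : (0:ℝ) < (q' : ℝ) := by exact_mod_cast hq'
    have hmain : (q : ℝ) * T₁ a β A < (q' : ℝ) * T₁ a β A := by
      calc (q : ℝ) * T₁ a β A = T₂ a β A := hsol
        _ < T₂ a β A' := h2
        _ = (q' : ℝ) * T₁ a β A' := hsol'.symm
        _ < (q' : ℝ) * T₁ a β A := mul_lt_mul_of_pos_left h1 hq'pos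
    have : (q : ℝ) < (q' : ℝ) := (mul_lt_mul_iff_left₀ hT1pos).mp hmain
    have : q < q' := by exact_mod_cast this
    exact lt_asymm this hqq'
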